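/- arXiv:1210.4822 — 2 statements merged into one kernel-verified Lean document; each statement's English description precedes it below -/
import Mathlib

section
/- For every natural number n ≥ 9, (1 - 2·√(log n / n))^(2·√(n·log n)) ≤ n^(-4), where the exponentiation is real exponentiation (rpow). (This is the paper's bound showing that two candidates, each sampling 2⌈√(n log n)⌉ referees, fail to share a common referee with probability at most n^(-4).) -/
lemma log_nine_le : Real.log 9 ≤ 9 / 4 := by
  rw [Real.log_le_iff_le_exp (by norm_num)]
  have h : Real.exp 1 > 2.7182818283 := Real.exp_one_gt_d9
  have h4 : Real.exp (9/4) ^ (4:ℕ) = Real.exp 9 := by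
    rw [← Real.exp_nat_mul]; norm_num
  have h9 : Real.exp 9 = Real.exp 1 ^ (9:ℕ) := by
    rw [← Real.exp_nat_mul]; norm_num
  have hb : (6561:ℝ) ≤ (2.7182818283:ℝ)^(9:ℕ) := by norm_num
  have h2 : (2.7182818283:ℝ)^(9:ℕ) ≤ Real.exp 1 ^ (9:ℕ) :=
    pow_le_pow_left₀ (by norm_num) h.le 9
  have h3 : (9:ℝ)^(4:ℕ) ≤ Real.exp (9/4) ^ (4:ℕ) := by
    rw [h4, h9]; norm_num; linarith
  exact le_of_pow_le_pow_left₀ (by norm_num) (Real.exp_pos _).le h3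

/-- Two candidates, each sampling `2⌈√(n log n)⌉` referees out of `n` nodes, fail to
share a common referee with probability at most
`(1 - 2√(log n / n))^(2√(n log n)) ≤ n⁻⁴` (real exponentiation). -/
theorem no_common_referee_prob_le (n : ℕ) (hn : 9 ≤ n) :
    (1 - 2 * Real.sqrt (Real.log n / n)) ^ (2 * Real.sqrt (n * Real.log n)) ≤
      (n : ℝ) ^ (-4 : ℝ) := by
  have hn9 : (9:ℝ) ≤ (n:ℝ) := by exact_mod_cast hn
  have hnpos : (0:ℝ) < n := by linarith
  have hL : 0 ≤ Real.log n := Real.log_nonneg (by linarith)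
  have he : Real.exp 1 ≤ 9 := by
    have := Real.exp_one_lt_d9; norm_num at this ⊢; linarith
  -- log n / n ≤ 1/4
  have hq : Real.log n / n ≤ 1 / 4 := by
    have h1 : Real.log n / n ≤ Real.log 9 / 9 := by
      have := Real.log_div_self_antitoneOn (a := 9) (b := (n:ℝ))
        (by simpa using he) (by show Real.exp 1 ≤ (n:ℝ); linarith) hn9
      simpa using this
    have := log_nine_le
    calc Real.log n / n ≤ Real.log 9 / 9 := h1
      _ ≤ (9/4) / 9 := by linarith
      _ = 1/4 := by norm_num
  set x := 2 * Real.sqrt (Real.log n / n) with hx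
  have hx1 : x ≤ 1 := by
    have : Real.sqrt (Real.log n / n) ≤ Real.sqrt (1/4) := Real.sqrt_le_sqrt hq
    have h14 : Real.sqrt (1/4) = 1/2 := by
      rw [show (1/4 : ℝ) = (1/2)^2 by norm_num, Real.sqrt_sq (by norm_num)]
    rw [hx]; linarith [this, h14 ▸ this]
  have hbase : 0 ≤ 1 - x := by linarith
  have hy : 0 ≤ 2 * Real.sqrt (n * Real.log n) := by positivity
  have hkey : x * (2 * Real.sqrt (n * Real.log n)) = 4 * Real.log n := by
    have : Real.sqrt (Real.log n / n) * Real.sqrt (n * Real.log n)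
        = Real.sqrt ((Real.log n / n) * (n * Real.log n)) :=
      (Real.sqrt_mul (by positivity) _).symm
    rw [hx]
    have hprod : (Real.log n / n) * (n * Real.log n) = (Real.log n)^2 := by
      field_simp
    rw [show 2 * Real.sqrt (Real.log n / n) * (2 * Real.sqrt (n * Real.log n))
        = 4 * (Real.sqrt (Real.log n / n) * Real.sqrt (n * Real.log n)) by ring,
      this, hprod, Real.sqrt_sq hL]
  calc (1 - x) ^ (2 * Real.sqrt (n * Real.log n))
      ≤ (Real.exp (-x)) ^ (2 * Real.sqrt (n * Real.log n)) :=
        Real.rpow_le_rpow hbase (by linarith [Real.add_one_le_exp (-x)]) hy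
    _ = Real.exp (-x * (2 * Real.sqrt (n * Real.log n))) := (Real.exp_mul _ _).symm
    _ = Real.exp (Real.log n * (-4)) := by rw [neg_mul, hkey]; ring_nf
    _ = (n:ℝ) ^ (-4 : ℝ) := (Real.rpow_def_of_pos hnpos _).symm
end

section
/- Let n ≥ 1 be a natural number and let X be distributed according to the binomial distribution with n trials and success probability p = 2·log n / n (which lies in [0,1] since 2·log n ≤ n). Then the probability that X > 7·log n is at most n^(-2). (This is the paper's Chernoff-bound claim that with probability at least 1 - n^(-2) there are at most 7 log n candidate nodes when each of n nodes independently becomes a candidate with probability 2 log n / n.) -/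
open scoped ENNReal

lemma binom_mgf_sum (n : ℕ) (p : NNReal) (hp : p ≤ 1) (E : ℝ≥0∞) :
    ∑ i : Fin (n+1), PMF.binomial p hp n i * E ^ (i:ℕ) = ((p:ℝ≥0∞) * E + (1-(p:ℝ≥0∞))) ^ n := by
  rw [add_pow, Finset.sum_fin_eq_sum_range]
  apply Finset.sum_congr rfl
  intro i hi
  rw [Finset.mem_range] at hi
  rw [dif_pos hi, PMF.binomial_apply]
  simp only [Fin.val_mk, Fin.val_last]
  ring

/-- Chernoff-bound claim: if `X` is binomial with `n` trials and success probability
`p = 2 log n / n`, then `P(X > 7 log n) ≤ n⁻²`. -/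
theorem binomial_candidates_tail_le (n : ℕ) (hn : 1 ≤ n)
    (hp : ENNReal.ofReal (2 * Real.log n / n) ≤ 1) :
    (PMF.binomial (Real.toNNReal (2 * Real.log n / n)) (ENNReal.coe_le_one_iff.mp hp) n).toMeasure
        {k : Fin (n + 1) | (k : ℝ) > 7 * Real.log n} ≤
      ENNReal.ofReal (((n : ℝ) ^ 2)⁻¹) := by
  set pr : ℝ := 2 * Real.log n / n with hpr
  set a : ℝ := 7 * Real.log n with ha
  have hn0 : (0:ℝ) < n := by exact_mod_cast hn
  have hlog : 0 ≤ Real.log n := Real.log_natCast_nonneg n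
  have hpr0 : 0 ≤ pr := by positivity
  set P := PMF.binomial (Real.toNNReal pr) (ENNReal.coe_le_one_iff.mp hp) n with hP
  set s : Set (Fin (n+1)) := {k | (k : ℝ) > a} with hs
  -- step 1: measure = sum of indicator
  rw [PMF.toMeasure_apply_fintype]
  -- step 2: indicator ≤ pmf * exp(x - a)
  have step2 : ∑ x, s.indicator P x ≤
      ∑ x : Fin (n+1), P x * ENNReal.ofReal (Real.exp ((x:ℝ) - a)) := by
    apply Finset.sum_le_sum
    intro x _
    by_cases hx : x ∈ s
    · rw [Set.indicator_of_mem hx]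
      apply le_mul_of_one_le_right (zero_le)
      rw [ENNReal.one_le_ofReal]
      exact Real.one_le_exp (by simpa [hs, sub_nonneg] using (le_of_lt hx))
    · rw [Set.indicator_of_notMem hx]; exact zero_le
  refine le_trans step2 ?_
  -- step 3: factor out exp(-a)
  have step3 : ∀ x : Fin (n+1), P x * ENNReal.ofReal (Real.exp ((x:ℝ) - a)) =
      ENNReal.ofReal (Real.exp (-a)) * (P x * ENNReal.ofReal (Real.exp 1) ^ (x:ℕ)) := by
    intro x
    have h1 : Real.exp ((x:ℝ) - a) = Real.exp (-a) * Real.exp 1 ^ (x:ℕ) := by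
      rw [Real.exp_one_pow, ← Real.exp_add]; ring_nf
    calc P x * ENNReal.ofReal (Real.exp ((x:ℝ) - a))
        = P x * (ENNReal.ofReal (Real.exp (-a)) * ENNReal.ofReal (Real.exp 1) ^ (x:ℕ)) := by
          rw [h1, ENNReal.ofReal_mul (Real.exp_pos _).le,
            ENNReal.ofReal_pow (Real.exp_pos _).le]
      _ = _ := by ring
  simp only [step3, ← Finset.mul_sum]
  rw [binom_mgf_sum]
  -- step 5 : (pE + (1-p))^n ≤ exp (n * pr * (e - 1))
  have hpr1 : pr ≤ 1 := by rwa [ENNReal.ofReal_le_one] at hp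
  have hbase : ENNReal.ofReal pr * ENNReal.ofReal (Real.exp 1) + (1 - ENNReal.ofReal pr)
      ≤ ENNReal.ofReal (Real.exp (pr * (Real.exp 1 - 1))) := by
    rw [← ENNReal.ofReal_mul hpr0, ← ENNReal.ofReal_one, ← ENNReal.ofReal_sub _ hpr0,
      ← ENNReal.ofReal_add (by positivity) (by linarith)]
    apply ENNReal.ofReal_le_ofReal
    calc pr * Real.exp 1 + (1 - pr) = pr * (Real.exp 1 - 1) + 1 := by ring
      _ ≤ Real.exp (pr * (Real.exp 1 - 1)) := Real.add_one_le_exp _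
  have hpow : (ENNReal.ofReal pr * ENNReal.ofReal (Real.exp 1) + (1 - ENNReal.ofReal pr)) ^ n
      ≤ ENNReal.ofReal (Real.exp (n * (pr * (Real.exp 1 - 1)))) := by
    calc _ ≤ ENNReal.ofReal (Real.exp (pr * (Real.exp 1 - 1))) ^ n := pow_le_pow_left' hbase n
      _ = ENNReal.ofReal (Real.exp (pr * (Real.exp 1 - 1)) ^ n) :=
          (ENNReal.ofReal_pow (Real.exp_pos _).le n).symm
      _ = _ := by rw [← Real.exp_nat_mul]
  calc ENNReal.ofReal (Real.exp (-a)) * _ ≤ ENNReal.ofReal (Real.exp (-a)) *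
        ENNReal.ofReal (Real.exp (n * (pr * (Real.exp 1 - 1)))) :=
        mul_le_mul_right hpow _
    _ = ENNReal.ofReal (Real.exp (-a + n * (pr * (Real.exp 1 - 1)))) := by
        rw [← ENNReal.ofReal_mul (Real.exp_pos _).le, ← Real.exp_add]
    _ ≤ ENNReal.ofReal (((n : ℝ) ^ 2)⁻¹) := by
        apply ENNReal.ofReal_le_ofReal
        have hnpr : (n:ℝ) * pr = 2 * Real.log n := by
          rw [hpr]; field_simp
        have he : Real.exp 1 < 2.7182818286 := Real.exp_one_lt_d9
        have hexp : -a + n * (pr * (Real.exp 1 - 1)) ≤ -(2 * Real.log n) := by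
          rw [ha, ← mul_assoc, hnpr]
          nlinarith [hlog, he]
        calc Real.exp (-a + n * (pr * (Real.exp 1 - 1))) ≤ Real.exp (-(2 * Real.log n)) :=
              Real.exp_le_exp.mpr hexp
          _ = ((n : ℝ) ^ 2)⁻¹ := by
              rw [Real.exp_neg, two_mul, Real.exp_add, Real.exp_log hn0]; ring_nf
end
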